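/- With x₁* = (-r, 0, …, 0), x₂* = (r, 0, …, 0) in ℝⁿ, γᵢ = L²/σᵢ², β = σ₂/σ₁, λ₁ = ((1+β)/(1+2β))·γ₁/(2r) - r/(1+2β), and ν₁ = (r/(2(1+2β)))·√(-(γ₁/r² - 4)((1+β)²γ₁/r² - 4β²)): if r ∈ (L/(2σ₁), (L/2)(1/σ₁ + 1/σ₂)], then the intersection of the set T = {x : (‖x‖² - r²)/(d₁(x)²d₂(x)²) + σ₁σ₂/L² = √(1/d₁(x)² - σ₁²/L²)·√(1/d₂(x)² - σ₂²/L²)} with the sphere ∂B(x₁*, L/σ₁) equals {x = (x₁, x̃) : x₁ = λ₁, ‖x̃‖ = ν₁}. If instead r ∈ (0, L/(2σ₁)], the intersection is empty. -/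

import Mathlib

private lemma norm_sub_single_sq {n : ℕ} (x : EuclideanSpace ℝ (Fin (n+1))) (a : ℝ) :
    ‖x - EuclideanSpace.single 0 a‖ ^ 2 = ‖x‖ ^ 2 - 2 * a * (x 0) + a ^ 2 := by
  rw [@norm_sub_sq_real]
  rw [EuclideanSpace.norm_single, real_inner_comm, EuclideanSpace.inner_single_left]
  simp [sq_abs]; ring

set_option maxHeartbeats 1000000 in
theorem stmt_11 {n : ℕ} (r σ₁ σ₂ L : ℝ) (hr : 0 < r) (h1 : 0 < σ₁) (h2 : 0 < σ₂) (hL : 0 < L)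
    (x₁s x₂s : EuclideanSpace ℝ (Fin (n + 1)))
    (hx1 : x₁s = EuclideanSpace.single 0 (-r)) (hx2 : x₂s = EuclideanSpace.single 0 r) :
    ((L / (2 * σ₁) < r ∧ r ≤ L / 2 * (1 / σ₁ + 1 / σ₂)) →
      {x : EuclideanSpace ℝ (Fin (n + 1)) |
          (‖x‖ ^ 2 - r ^ 2) / (‖x - x₁s‖ ^ 2 * ‖x - x₂s‖ ^ 2) + σ₁ * σ₂ / L ^ 2 =
            Real.sqrt (1 / ‖x - x₁s‖ ^ 2 - σ₁ ^ 2 / L ^ 2) *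
              Real.sqrt (1 / ‖x - x₂s‖ ^ 2 - σ₂ ^ 2 / L ^ 2)} ∩
        {x | ‖x - x₁s‖ = L / σ₁} =
      {x | x 0 = ((1 + σ₂ / σ₁) / (1 + 2 * (σ₂ / σ₁))) * (L ^ 2 / σ₁ ^ 2 / (2 * r)) -
              r / (1 + 2 * (σ₂ / σ₁)) ∧
            ‖x - EuclideanSpace.single 0 (x 0)‖ =
              r / (2 * (1 + 2 * (σ₂ / σ₁))) *
                Real.sqrt (-(L ^ 2 / σ₁ ^ 2 / r ^ 2 - 4) *
                  ((1 + σ₂ / σ₁) ^ 2 * (L ^ 2 / σ₁ ^ 2) / r ^ 2 - 4 * (σ₂ / σ₁) ^ 2))}) ∧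
    (r ≤ L / (2 * σ₁) →
      {x : EuclideanSpace ℝ (Fin (n + 1)) |
          (‖x‖ ^ 2 - r ^ 2) / (‖x - x₁s‖ ^ 2 * ‖x - x₂s‖ ^ 2) + σ₁ * σ₂ / L ^ 2 =
            Real.sqrt (1 / ‖x - x₁s‖ ^ 2 - σ₁ ^ 2 / L ^ 2) *
              Real.sqrt (1 / ‖x - x₂s‖ ^ 2 - σ₂ ^ 2 / L ^ 2)} ∩
        {x | ‖x - x₁s‖ = L / σ₁} = ∅) := by
  subst hx1 hx2
  set β := σ₂ / σ₁ with hβ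
  set γ := L ^ 2 / σ₁ ^ 2 with hγ
  have hβ0 : 0 < β := div_pos h2 h1
  have hs : (0:ℝ) < 1 + 2 * β := by linarith
  have hγ0 : 0 < γ := div_pos (pow_pos hL 2) (pow_pos h1 2)
  have hbg : σ₁ * σ₂ / L ^ 2 = β / γ := by rw [hβ, hγ]; field_simp
  have hzero : 1 / γ - σ₁ ^ 2 / L ^ 2 = 0 := by rw [hγ]; field_simp; ring
  have hγd : γ = (L / σ₁) ^ 2 := by rw [hγ, div_pow]
  have hsub : σ₂ = β * σ₁ := by rw [hβ]; field_simp
  have hγσ : γ * σ₁ ^ 2 = L ^ 2 := by rw [hγ]; field_simp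
  set lam : ℝ := ((1 + β) / (1 + 2 * β)) * (γ / (2 * r)) - r / (1 + 2 * β) with hlam
  have hlamkey : 2 * r * lam * (1 + 2 * β) = (1 + β) * γ - 2 * r ^ 2 := by
    rw [hlam]; field_simp
  set A : ℝ := -(γ / r ^ 2 - 4) * ((1 + β) ^ 2 * γ / r ^ 2 - 4 * β ^ 2) with hA
  have hAeq : A * r ^ 2 * r ^ 2
      = (4 * r ^ 2 - γ) * ((1 + β) ^ 2 * γ - 4 * β ^ 2 * r ^ 2) := by
    rw [hA]; field_simp; ring
  clear_value A lam γ β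
  clear hlam hA hβ hγ
  constructor
  · rintro ⟨ha, hb⟩
    have h4r : γ < 4 * r ^ 2 := by
      have hq2 : L / σ₁ < 2 * r := by
        rw [div_lt_iff₀ (by positivity)] at ha
        rw [div_lt_iff₀ h1]
        linarith
      rw [hγd]
      nlinarith [hq2, div_pos hL h1]
    have h2nd : 4 * β ^ 2 * r ^ 2 ≤ (1 + β) ^ 2 * γ := by
      have hb' : 2 * σ₁ * σ₂ * r ≤ L * (σ₁ + σ₂) := by
        have h' : L / 2 * (1 / σ₁ + 1 / σ₂) = L * (σ₁ + σ₂) / (2 * σ₁ * σ₂) := by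
          field_simp; ring
        rw [h', le_div_iff₀ (by positivity)] at hb
        linarith
      have hsq : (2 * σ₁ * σ₂ * r) ^ 2 ≤ (L * (σ₁ + σ₂)) ^ 2 :=
        pow_le_pow_left₀ (by positivity) hb' 2
      rw [hsub] at hsq
      have hp : (0:ℝ) < σ₁ ^ 2 * σ₁ ^ 2 := by positivity
      rw [← mul_le_mul_iff_left₀ hp]
      have hE2 : (L * (σ₁ + β * σ₁)) ^ 2 = (1 + β) ^ 2 * γ * (σ₁ ^ 2 * σ₁ ^ 2) := by
        linear_combination (-(1 + β) ^ 2 * σ₁ ^ 2) * hγσ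
      nlinarith [hsq, hE2]
    have hA0 : 0 ≤ A := by
      have hprod : 0 ≤ (4 * r ^ 2 - γ) * ((1 + β) ^ 2 * γ - 4 * β ^ 2 * r ^ 2) :=
        mul_nonneg (by linarith) (by linarith)
      nlinarith [hAeq, hprod, mul_pos (pow_pos hr 2) (pow_pos hr 2)]
    have hNu : (r / (2 * (1 + 2 * β)) * Real.sqrt A) ^ 2
        = γ - r ^ 2 - 2 * r * lam - lam ^ 2 := by
      rw [mul_pow, Real.sq_sqrt hA0]
      have hc : ((2 * (1 + 2 * β)) ^ 2 * r ^ 2 : ℝ) ≠ 0 := by positivity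
      apply mul_right_cancel₀ hc
      have e0 : (r / (2 * (1 + 2 * β))) ^ 2 * A * ((2 * (1 + 2 * β)) ^ 2 * r ^ 2)
          = A * r ^ 2 * r ^ 2 := by field_simp
      rw [e0, hAeq]
      linear_combination (4 * r ^ 2 * (1 + 2 * β) + 2 * r * lam * (1 + 2 * β)
        + ((1 + β) * γ - 2 * r ^ 2)) * hlamkey
    ext x
    simp only [Set.mem_inter_iff, Set.mem_setOf_eq]
    have e1 := norm_sub_single_sq x (-r)
    have e2 := norm_sub_single_sq x r
    have e3 := norm_sub_single_sq x (x 0)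
    constructor
    · rintro ⟨hT, hS⟩
      have hd1 : ‖x - EuclideanSpace.single 0 (-r)‖ ^ 2 = γ := by rw [hS, hγd]
      have hm : ‖x‖ ^ 2 + 2 * r * (x 0) + r ^ 2 = γ := by rw [← hd1, e1]; ring
      have hmm : ‖x‖ ^ 2 = γ - 2 * r * (x 0) - r ^ 2 := by linarith
      rw [hd1, hzero, Real.sqrt_zero, zero_mul, hbg] at hT
      have hd2pos : 0 < ‖x - EuclideanSpace.single 0 r‖ ^ 2 := by
        rcases lt_or_eq_of_le (sq_nonneg ‖x - EuclideanSpace.single 0 r‖) with h | h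
        · exact h
        · exfalso
          rw [← h, mul_zero, div_zero, zero_add] at hT
          have : 0 < β / γ := div_pos hβ0 hγ0
          linarith
      have hcore : ‖x‖ ^ 2 - r ^ 2 = -β * ‖x - EuclideanSpace.single 0 r‖ ^ 2 := by
        have h5 : ‖x‖ ^ 2 - r ^ 2
            = -(β / γ) * (γ * ‖x - EuclideanSpace.single 0 r‖ ^ 2) := by
          refine (div_eq_iff (ne_of_gt (mul_pos hγ0 hd2pos))).mp ?_
          linarith
        rw [h5]
        field_simp
      rw [e2, hmm] at hcore
      have hlin : 2 * r * (x 0) * (1 + 2 * β) = (1 + β) * γ - 2 * r ^ 2 := by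
        linear_combination -hcore
      have hx0 : x 0 = lam := by
        have h2rs : (2 * r * (1 + 2 * β)) ≠ 0 := by positivity
        refine mul_right_cancel₀ h2rs ?_
        linear_combination hlin - hlamkey
      refine ⟨hx0, ?_⟩
      have htil : ‖x - EuclideanSpace.single 0 (x 0)‖ ^ 2
          = (r / (2 * (1 + 2 * β)) * Real.sqrt A) ^ 2 := by
        rw [e3, hNu, hmm, hx0]
        ring
      rw [← Real.sqrt_sq (norm_nonneg (x - EuclideanSpace.single 0 (x 0))), htil,
        Real.sqrt_sq (by positivity)]
    · rintro ⟨hx0, hN⟩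
      have hNsq : ‖x - EuclideanSpace.single 0 (x 0)‖ ^ 2
          = (r / (2 * (1 + 2 * β)) * Real.sqrt A) ^ 2 := by rw [hN]
      rw [e3, hNu, hx0] at hNsq
      have hm2 : ‖x‖ ^ 2 = γ - r ^ 2 - 2 * r * lam := by linarith
      have hd1sq : ‖x - EuclideanSpace.single 0 (-r)‖ ^ 2 = γ := by
        rw [e1, hx0, hm2]; ring
      have hS : ‖x - EuclideanSpace.single 0 (-r)‖ = L / σ₁ := by
        rw [← Real.sqrt_sq (norm_nonneg _), hd1sq, hγd, Real.sqrt_sq (by positivity)]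
      refine ⟨?_, hS⟩
      have hd2sq : ‖x - EuclideanSpace.single 0 r‖ ^ 2 = γ - 4 * r * lam := by
        rw [e2, hx0, hm2]; ring
      have hd2pos : 0 < γ - 4 * r * lam := by nlinarith [hlamkey, h4r, hs]
      rw [hd1sq, hzero, Real.sqrt_zero, zero_mul, hbg, hd2sq, hm2]
      have hDne : γ * (γ - 4 * r * lam) ≠ 0 := ne_of_gt (mul_pos hγ0 hd2pos)
      rw [div_add_div _ _ hDne (ne_of_gt hγ0), div_eq_zero_iff]
      left
      linear_combination -γ * hlamkey
  · intro hr2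
    have hLs : 2 * r ≤ L / σ₁ := by
      rw [le_div_iff₀ (by positivity)] at hr2
      rw [le_div_iff₀ h1]
      linarith
    have h4r : 4 * r ^ 2 ≤ γ := by
      rw [hγd]
      nlinarith [hLs, hr]
    ext x
    simp only [Set.mem_inter_iff, Set.mem_setOf_eq, Set.mem_empty_iff_false, iff_false,
      not_and]
    intro hT hS
    have e1 := norm_sub_single_sq x (-r)
    have e2 := norm_sub_single_sq x r
    have hd1 : ‖x - EuclideanSpace.single 0 (-r)‖ ^ 2 = γ := by rw [hS, hγd]
    have hm : ‖x‖ ^ 2 + 2 * r * (x 0) + r ^ 2 = γ := by rw [← hd1, e1]; ring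
    have hmm : ‖x‖ ^ 2 = γ - 2 * r * (x 0) - r ^ 2 := by linarith
    rw [hd1, hzero, Real.sqrt_zero, zero_mul, hbg] at hT
    have hd2pos : 0 < ‖x - EuclideanSpace.single 0 r‖ ^ 2 := by
      rcases lt_or_eq_of_le (sq_nonneg ‖x - EuclideanSpace.single 0 r‖) with h | h
      · exact h
      · rw [← h, mul_zero, div_zero, zero_add] at hT
        have : 0 < β / γ := div_pos hβ0 hγ0
        linarith
    have hcore : ‖x‖ ^ 2 - r ^ 2 = -β * ‖x - EuclideanSpace.single 0 r‖ ^ 2 := by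
      have h5 : ‖x‖ ^ 2 - r ^ 2
          = -(β / γ) * (γ * ‖x - EuclideanSpace.single 0 r‖ ^ 2) := by
        refine (div_eq_iff (ne_of_gt (mul_pos hγ0 hd2pos))).mp ?_
        linarith
      rw [h5]
      field_simp
    rw [e2, hmm] at hcore hd2pos
    have hlin : 2 * r * (x 0) * (1 + 2 * β) = (1 + β) * γ - 2 * r ^ 2 := by
      linear_combination -hcore
    have hd2pos' : 0 < γ - 4 * r * (x 0) := by nlinarith [hd2pos]
    nlinarith [hd2pos', hlin, h4r, hs]
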